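/- Main theorem (necessity): Let T be a 2-isometry, u,v nonzero with ‖v‖=1, K = u⊗v, S = {x ∈ ker K : Tx ∈ ker K}, and suppose T̃ := T + K is a 2-isometry and S ≠ ker K. Then for every nonzero x ∈ S^⊥ ∩ ker K, Re( ⟨T* P_{ker K} T* u, x⟩ / ⟨T*v, x⟩ ) = (−‖u‖² − 2Re⟨u, Tv⟩)/2. -/

import Mathlib

open ContinuousLinearMap

variable {H : Type*} [NormedAddCommGroup H] [InnerProductSpace ℂ H] [CompleteSpace H]

/-- The rank-one operator `u ⊗ v`, defined by `(u ⊗ v) h = ⟨h, v⟩ u`. -/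
noncomputable def rankOne (u v : H) : H →L[ℂ] H := (innerSL ℂ v).smulRight u

/-- `Δ₂(T) = I - 2 T*T + T*²T²`. -/
noncomputable def Delta2 (T : H →L[ℂ] H) : H →L[ℂ] H :=
  1 - 2 • (ContinuousLinearMap.adjoint T ∘L T)
    + ContinuousLinearMap.adjoint (T ∘L T) ∘L (T ∘L T)

lemma two_iso_inner (A : H →L[ℂ] H) (hA : Delta2 A = 0) (h : H) :
    (inner ℂ h h : ℂ) - 2 * inner ℂ (A h) (A h) + inner ℂ (A (A h)) (A (A h)) = 0 := by
  have h0 : Delta2 A h = 0 := by rw [hA]; rfl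
  have h1 : (inner ℂ h (Delta2 A h) : ℂ) = 0 := by rw [h0, inner_zero_right]
  simp only [Delta2, ContinuousLinearMap.add_apply, ContinuousLinearMap.sub_apply,
    ContinuousLinearMap.smul_apply, ContinuousLinearMap.one_apply,
    ContinuousLinearMap.coe_comp', Function.comp_apply, inner_add_right, inner_sub_right,
    inner_smul_right, ContinuousLinearMap.adjoint_inner_right] at h1
  rw [two_smul] at h1
  rw [inner_add_right, ContinuousLinearMap.adjoint_inner_right] at h1
  linear_combination h1

set_option maxHeartbeats 800000 in
theorem stmt_12 (T : H →L[ℂ] H) (hT : Delta2 T = 0) (u v : H) (hu : u ≠ 0) (hv : v ≠ 0)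
    (hv1 : ‖v‖ = 1) (K : H →L[ℂ] H) (hK : K = rankOne u v)
    (S : Submodule ℂ H) (hS : ∀ x : H, x ∈ S ↔ K x = 0 ∧ K (T x) = 0)
    (hSne : S ≠ LinearMap.ker (K : H →ₗ[ℂ] H))
    (hTt : Delta2 (T + K) = 0) :
    ∀ x ∈ Sᗮ ⊓ LinearMap.ker (K : H →ₗ[ℂ] H), x ≠ 0 →
      ((inner ℂ x (ContinuousLinearMap.adjoint T
          ((Submodule.orthogonalProjectionOnto (ℂ ∙ v)ᗮ (ContinuousLinearMap.adjoint T u) : H))) : ℂ) /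
        (inner ℂ x (ContinuousLinearMap.adjoint T v) : ℂ)).re =
      (-‖u‖ ^ 2 - 2 * (inner ℂ (T v) u : ℂ).re) / 2 := by
  intro x hx hx0
  rw [Submodule.mem_inf] at hx
  obtain ⟨hxS, hxK⟩ := hx
  have hKapp : ∀ y : H, K y = (inner ℂ v y : ℂ) • u := by
    intro y; rw [hK]; simp [rankOne]
  have hKx : K x = 0 := hxK
  have hvx : (inner ℂ v x : ℂ) = 0 := by
    rw [hKapp] at hKx
    rcases smul_eq_zero.mp hKx with h | h
    · exact h
    · exact absurd h hu
  set c : ℂ := inner ℂ v (T x) with hc_def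
  -- c ≠ 0
  have hc : c ≠ 0 := by
    intro h0
    have hxmemS : x ∈ S := (hS x).mpr ⟨hKx, by rw [hKapp, ← hc_def, h0, zero_smul]⟩
    have hxx : (inner ℂ x x : ℂ) = 0 := (Submodule.mem_orthogonal S x).mp hxS x hxmemS
    exact hx0 (inner_self_eq_zero.mp hxx)
  -- two-isometry identities
  have e1 := two_iso_inner T hT x
  have e2 := two_iso_inner (T + K) hTt x
  have hTKx : (T + K) x = T x := by
    rw [ContinuousLinearMap.add_apply, hKx, add_zero]
  have hTK2 : (T + K) (T x) = T (T x) + c • u := by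
    rw [ContinuousLinearMap.add_apply, hKapp]
  rw [hTKx, hTK2] at e2
  have e3 : (inner ℂ (T (T x) + c • u) (T (T x) + c • u) : ℂ)
      = inner ℂ (T (T x)) (T (T x)) := by linear_combination e2 - e1
  simp only [inner_add_left, inner_add_right, inner_smul_left, inner_smul_right] at e3
  -- e3 gives the key complex equation
  have e4 : c * inner ℂ (T (T x)) u + (starRingEnd ℂ) c * inner ℂ u (T (T x))
      + (starRingEnd ℂ) c * c * inner ℂ u u = 0 := by linear_combination e3
  -- decomposition of T x
  set P := Submodule.orthogonalProjectionOnto (ℂ ∙ v)ᗮ with hP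
  have hdecomp : T x = (Submodule.orthogonalProjectionOnto (ℂ ∙ v) (T x) : H) + (P (T x) : H) :=
    (Submodule.starProjection_add_starProjection_orthogonal (K := ℂ ∙ v) (w := T x)).symm
  have hproj : (Submodule.orthogonalProjectionOnto (ℂ ∙ v) (T x) : H) = c • v := by
    rw [Submodule.coe_orthogonalProjectionOnto_apply, Submodule.starProjection_singleton, hv1]
    norm_num
    rfl
  rw [hproj] at hdecomp
  set N : ℂ := inner ℂ x (ContinuousLinearMap.adjoint T
      ((P (ContinuousLinearMap.adjoint T u) : H))) with hN_def
  set E : ℂ := inner ℂ (T v) u with hE_def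
  -- N = ⟪T (P (T x)), u⟫
  have hNval : (inner ℂ (T ((P (T x) : H))) u : ℂ) = N := by
    rw [hN_def, ContinuousLinearMap.adjoint_inner_right, hP]
    simp only [Submodule.coe_orthogonalProjectionOnto_apply]
    rw [← Submodule.inner_starProjection_left_eq_right, ← ContinuousLinearMap.adjoint_inner_right]
  -- ⟪T (T x), u⟫ = N + conj c * E
  have hT2u : (inner ℂ (T (T x)) u : ℂ) = N + (starRingEnd ℂ) c * E := by
    conv_lhs => rw [hdecomp]
    rw [map_add, map_smul, inner_add_left, inner_smul_left, hNval, hE_def]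
    ring
  have hT2u' : (inner ℂ u (T (T x)) : ℂ) = (starRingEnd ℂ) (N + (starRingEnd ℂ) c * E) := by
    rw [← inner_conj_symm, hT2u]
  have huu : (inner ℂ u u : ℂ) = ((‖u‖ ^ 2 : ℝ) : ℂ) := by
    rw [inner_self_eq_norm_sq_to_K]; norm_cast
  rw [hT2u, hT2u', huu] at e4
  -- extract real part
  have hz : c * N + (starRingEnd ℂ) (c * N) = ((2 * (c * N).re : ℝ) : ℂ) :=
    Complex.add_conj _
  have hE2 : E + (starRingEnd ℂ) E = ((2 * E.re : ℝ) : ℂ) := Complex.add_conj _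
  have hq : (starRingEnd ℂ) c * c = ((Complex.normSq c : ℝ) : ℂ) := by
    rw [mul_comm, Complex.mul_conj]
  simp only [map_add, map_mul, Complex.conj_conj] at e4 hz
  have keyC : ((2 * (c * N).re + Complex.normSq c * (2 * E.re + ‖u‖ ^ 2) : ℝ) : ℂ) = 0 := by
    push_cast
    push_cast at e4 hz hE2 hq
    linear_combination e4 - hz - (E + (starRingEnd ℂ) E + (‖u‖ : ℂ) ^ 2) * hq
      - ((Complex.normSq c : ℝ) : ℂ) * hE2
  have key : 2 * (c * N).re + Complex.normSq c * (2 * E.re + ‖u‖ ^ 2) = 0 := by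
    exact_mod_cast keyC
  -- denominator
  have hD : (inner ℂ x (ContinuousLinearMap.adjoint T v) : ℂ) = (starRingEnd ℂ) c := by
    rw [ContinuousLinearMap.adjoint_inner_right, ← inner_conj_symm]
  rw [hD]
  have hcbar : (starRingEnd ℂ) c ≠ 0 := by
    simpa using hc
  have hdiv : N / (starRingEnd ℂ) c = (c * N) / ((Complex.normSq c : ℝ) : ℂ) := by
    rw [div_eq_div_iff hcbar (by exact_mod_cast ne_of_gt (Complex.normSq_pos.mpr hc))]
    rw [← hq]; ring
  rw [hdiv, Complex.div_ofReal_re]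
  have hq0 : (0 : ℝ) < Complex.normSq c := Complex.normSq_pos.mpr hc
  rw [div_eq_iff (ne_of_gt hq0)]
  linarith [key]
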